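/- Let L = ℂ((t)) with its t-adic valuation v, and let τ = diag(t^{k_0},...,t^{k_n}) ∈ GL_{n+1}(L) with k_0 < k_1 ≤ ... ≤ k_{n-1} < k_n. Let η_1,...,η_r ∈ GL_{n+1}(ℂ), and suppose that for all i ≠ j in {1,...,r}, the vectors η_i(e_0) and η_i(e_n) do not lie in ker η_j(e_0^*) ∪ ker η_j(e_n^*) (where η_j acts on the dual basis vectors by the contragredient action). Then the elements g_i := η_i τ η_i^{-1}, i = 1,...,r, freely generate a free subgroup of GL_{n+1}(L) of rank r. -/

import Mathlib

open Matrix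

noncomputable section PingPongAux

private lemma ppa_orderTop_mul (x y : LaurentSeries ℂ) :
    (x * y).orderTop = x.orderTop + y.orderTop := by
  have h := (HahnSeries.addVal ℤ ℂ).map_mul x y
  rwa [HahnSeries.addVal_apply, HahnSeries.addVal_apply, HahnSeries.addVal_apply] at h

private lemma ppa_tpow : ∀ m : ℤ,
    (HahnSeries.single (1 : ℤ) (1 : ℂ) : LaurentSeries ℂ) ^ m = HahnSeries.single m 1 := by
  have hnat : ∀ p : ℕ,
      (HahnSeries.single (1 : ℤ) (1 : ℂ) : LaurentSeries ℂ) ^ p = HahnSeries.single (p : ℤ) 1 := by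
    intro p
    induction p with
    | zero => simp [HahnSeries.single_zero_one]
    | succ p ih =>
        rw [pow_succ, ih, HahnSeries.single_mul_single, mul_one]
        norm_num
  intro m
  cases m with
  | ofNat p => simpa using hnat p
  | negSucc p =>
      rw [zpow_negSucc, hnat (p + 1)]
      refine inv_eq_of_mul_eq_one_right ?_
      rw [HahnSeries.single_mul_single, mul_one]
      have : ((p : ℤ) + 1) + Int.negSucc p = 0 := by
        rw [Int.negSucc_eq]; ring
      rw [show (((p : ℕ) + 1 : ℕ) : ℤ) + Int.negSucc p = 0 by push_cast; rw [Int.negSucc_eq]; ring]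
      exact HahnSeries.single_zero_one

private lemma ppa_le_orderTop_sum {α : Type*} (s : Finset α) (f : α → LaurentSeries ℂ)
    (c : WithTop ℤ) (h : ∀ i ∈ s, c ≤ (f i).orderTop) :
    c ≤ (∑ i ∈ s, f i).orderTop := by
  classical
  induction s using Finset.induction with
  | empty => simp
  | @insert a s hx ih =>
      rw [Finset.sum_insert hx]
      refine le_trans ?_ HahnSeries.min_orderTop_le_orderTop_add
      exact le_min (h a (Finset.mem_insert_self a s))
        (ih fun i hi => h i (Finset.mem_insert_of_mem hi))

private lemma ppa_lt_orderTop_sum {α : Type*} (s : Finset α) (f : α → LaurentSeries ℂ)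
    (c : ℤ) (h : ∀ i ∈ s, (c : WithTop ℤ) < (f i).orderTop) :
    (c : WithTop ℤ) < (∑ i ∈ s, f i).orderTop := by
  classical
  induction s using Finset.induction with
  | empty => simpa using WithTop.coe_lt_top c
  | @insert a s hx ih =>
      rw [Finset.sum_insert hx]
      refine lt_of_lt_of_le ?_ HahnSeries.min_orderTop_le_orderTop_add
      exact lt_min (h a (Finset.mem_insert_self a s))
        (ih fun i hi => h i (Finset.mem_insert_of_mem hi))

private lemma ppa_orderTop_sum_eq {α : Type*} [DecidableEq α] (s : Finset α)
    (f : α → LaurentSeries ℂ) (c : ℤ) (l0 : α) (hl0 : l0 ∈ s)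
    (h0 : (f l0).orderTop = (c : WithTop ℤ))
    (h : ∀ i ∈ s, i ≠ l0 → (c : WithTop ℤ) < (f i).orderTop) :
    (∑ i ∈ s, f i).orderTop = (c : WithTop ℤ) := by
  rw [← Finset.add_sum_erase s f hl0]
  have hlt : (f l0).orderTop < (∑ i ∈ s.erase l0, f i).orderTop := by
    rw [h0]
    exact ppa_lt_orderTop_sum _ _ _ fun i hi =>
      h i (Finset.mem_of_mem_erase hi) (Finset.ne_of_mem_erase hi)
  rw [HahnSeries.orderTop_add_eq_left hlt, h0]

/-- `Z η i y` is the coordinate vector of `y` in the frame of `η i`. -/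
private def ppaZ {n r : ℕ} (η : Fin r → GL (Fin (n + 1)) ℂ) (i : Fin r)
    (y : Fin (n + 1) → LaurentSeries ℂ) : Fin (n + 1) → LaurentSeries ℂ :=
  Matrix.mulVec
    (((Matrix.GeneralLinearGroup.map (HahnSeries.C : ℂ →+* LaurentSeries ℂ) (η i))⁻¹ :
      GL (Fin (n + 1)) (LaurentSeries ℂ)) : Matrix (Fin (n + 1)) (Fin (n + 1)) (LaurentSeries ℂ)) y

private def ppaLoc (n : ℕ) (b : Bool) : Fin (n + 1) := if b then 0 else Fin.last n

private def ppaDOM {n r : ℕ} (η : Fin r → GL (Fin (n + 1)) ℂ) (i : Fin r) (b : Bool)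
    (y : Fin (n + 1) → LaurentSeries ℂ) : Prop :=
  ∀ l, l ≠ ppaLoc n b → (ppaZ η i y (ppaLoc n b)).orderTop < (ppaZ η i y l).orderTop

private def ppaSEMI {n r : ℕ} (η : Fin r → GL (Fin (n + 1)) ℂ) (i : Fin r) (b : Bool)
    (y : Fin (n + 1) → LaurentSeries ℂ) : Prop :=
  ∃ μ : ℤ, (ppaZ η i y (ppaLoc n b)).orderTop = (μ : WithTop ℤ) ∧
    ∀ l, (μ : WithTop ℤ) ≤ (ppaZ η i y l).orderTop


private lemma ppa_coe_glmap {n : ℕ} (g : GL (Fin (n + 1)) ℂ) :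
    ((Matrix.GeneralLinearGroup.map (HahnSeries.C : ℂ →+* LaurentSeries ℂ) g :
      GL (Fin (n + 1)) (LaurentSeries ℂ)) : Matrix (Fin (n + 1)) (Fin (n + 1)) (LaurentSeries ℂ)) =
    (g : Matrix (Fin (n + 1)) (Fin (n + 1)) ℂ).map
      (HahnSeries.C : ℂ →+* LaurentSeries ℂ) := rfl

private lemma ppa_orderTop_C (a : ℂ) (ha : a ≠ 0) :
    (HahnSeries.C a : LaurentSeries ℂ).orderTop = (0 : WithTop ℤ) := by
  rw [HahnSeries.C_apply]
  exact_mod_cast HahnSeries.orderTop_single ha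

private lemma ppa_C_mul_le (a : ℂ) (u : LaurentSeries ℂ) :
    u.orderTop ≤ (HahnSeries.C a * u).orderTop := by
  by_cases ha : a = 0
  · simp [ha]
  · rw [ppa_orderTop_mul, ppa_orderTop_C a ha, zero_add]

private lemma ppa_C_mul_eq (a : ℂ) (u : LaurentSeries ℂ) (ha : a ≠ 0) :
    (HahnSeries.C a * u).orderTop = u.orderTop := by
  rw [ppa_orderTop_mul, ppa_orderTop_C a ha, zero_add]

private lemma ppa_Z_mul {n r : ℕ} (η : Fin r → GL (Fin (n + 1)) ℂ) (i : Fin r)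
    (g : GL (Fin (n + 1)) (LaurentSeries ℂ)) (y : Fin (n + 1) → LaurentSeries ℂ) :
    ppaZ η i (Matrix.mulVec (g : Matrix (Fin (n + 1)) (Fin (n + 1)) (LaurentSeries ℂ)) y) =
    Matrix.mulVec
      ((((Matrix.GeneralLinearGroup.map (HahnSeries.C : ℂ →+* LaurentSeries ℂ) (η i))⁻¹ * g :
        GL (Fin (n + 1)) (LaurentSeries ℂ)) :
        Matrix (Fin (n + 1)) (Fin (n + 1)) (LaurentSeries ℂ))) y := by
  unfold ppaZ
  rw [Matrix.mulVec_mulVec, Matrix.GeneralLinearGroup.coe_mul]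

private lemma ppa_ex_other {n : ℕ} (hn : 1 ≤ n) (b : Bool) :
    ∃ l1 : Fin (n + 1), l1 ≠ ppaLoc n b := by
  have hne0 : (0 : Fin (n + 1)) ≠ Fin.last n := by
    simp only [ne_eq, Fin.ext_iff, Fin.val_zero, Fin.val_last]
    omega
  cases b with
  | false => exact ⟨0, by simpa [ppaLoc] using hne0⟩
  | true => exact ⟨Fin.last n, by simpa [ppaLoc] using hne0.symm⟩

private lemma ppa_dom_semi {n r : ℕ} (hn : 1 ≤ n) (η : Fin r → GL (Fin (n + 1)) ℂ)
    (i : Fin r) (b : Bool) (y : Fin (n + 1) → LaurentSeries ℂ)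
    (hd : ppaDOM η i b y) : ppaSEMI η i b y := by
  obtain ⟨l1, hl1⟩ := ppa_ex_other hn b
  have hfin := ne_top_of_lt (hd l1 hl1)
  obtain ⟨μ, hμ⟩ := WithTop.ne_top_iff_exists.mp hfin
  refine ⟨μ, hμ.symm, fun l => ?_⟩
  by_cases h : l = ppaLoc n b
  · rw [h, hμ]
  · rw [hμ]; exact le_of_lt (hd l h)

private lemma ppa_pump {n r : ℕ}
    (k : Fin (n + 1) → ℤ)
    (h0 : ∀ i : Fin (n + 1), i ≠ 0 → k 0 < k i)
    (hlast : ∀ i : Fin (n + 1), i ≠ Fin.last n → k i < k (Fin.last n))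
    (τ : GL (Fin (n + 1)) (LaurentSeries ℂ))
    (hτ : (τ : Matrix (Fin (n+1)) (Fin (n+1)) (LaurentSeries ℂ)) =
      Matrix.diagonal (fun i =>
        (HahnSeries.single (1 : ℤ) (1 : ℂ) : LaurentSeries ℂ) ^ (k i)))
    (η : Fin r → GL (Fin (n + 1)) ℂ) (i : Fin r) (b : Bool)
    (y : Fin (n + 1) → LaurentSeries ℂ) (hs : ppaSEMI η i b y) :
    ppaDOM η i b (Matrix.mulVec
      ((cond b
        (Matrix.GeneralLinearGroup.map (HahnSeries.C : ℂ →+* LaurentSeries ℂ) (η i) * τ *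
          (Matrix.GeneralLinearGroup.map (HahnSeries.C : ℂ →+* LaurentSeries ℂ) (η i))⁻¹)
        ((Matrix.GeneralLinearGroup.map (HahnSeries.C : ℂ →+* LaurentSeries ℂ) (η i) * τ *
          (Matrix.GeneralLinearGroup.map (HahnSeries.C : ℂ →+* LaurentSeries ℂ) (η i))⁻¹)⁻¹) :
        GL (Fin (n + 1)) (LaurentSeries ℂ)) :
        Matrix (Fin (n + 1)) (Fin (n + 1)) (LaurentSeries ℂ)) y) := by
  obtain ⟨μ, hμ0, hμall⟩ := hs
  have hτd : (τ : Matrix (Fin (n+1)) (Fin (n+1)) (LaurentSeries ℂ)) =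
      Matrix.diagonal (fun l => (HahnSeries.single (k l) (1 : ℂ) : LaurentSeries ℂ)) := by
    rw [hτ]
    have hfun : (fun i => (HahnSeries.single (1:ℤ) (1:ℂ) : LaurentSeries ℂ) ^ (k i)) =
        fun l => (HahnSeries.single (k l) (1:ℂ) : LaurentSeries ℂ) :=
      funext fun l => ppa_tpow (k l)
    rw [hfun]
  have hτinv : ((τ⁻¹ : GL (Fin (n+1)) (LaurentSeries ℂ)) :
      Matrix (Fin (n+1)) (Fin (n+1)) (LaurentSeries ℂ)) =
      Matrix.diagonal (fun l => (HahnSeries.single (-k l) (1 : ℂ) : LaurentSeries ℂ)) := by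
    rw [Matrix.GeneralLinearGroup.coe_inv, hτd]
    refine Matrix.inv_eq_left_inv ?_
    rw [Matrix.diagonal_mul_diagonal]
    have hfun : (fun l => (HahnSeries.single (-k l) (1:ℂ) : LaurentSeries ℂ) *
        (HahnSeries.single (k l) (1:ℂ) : LaurentSeries ℂ)) =
        fun _ => (1 : LaurentSeries ℂ) := by
      funext l
      rw [HahnSeries.single_mul_single, mul_one, neg_add_cancel]
      exact HahnSeries.single_zero_one
    rw [hfun]
    simpa using Matrix.diagonal_one
  have main : ∀ c : Fin (n + 1) → ℤ, (∀ l, l ≠ ppaLoc n b → c (ppaLoc n b) < c l) →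
      ∀ l, l ≠ ppaLoc n b →
        (HahnSeries.single (c (ppaLoc n b)) (1:ℂ) * ppaZ η i y (ppaLoc n b)).orderTop <
        (HahnSeries.single (c l) (1:ℂ) * ppaZ η i y l).orderTop := by
    intro c hc l hl
    rw [ppa_orderTop_mul, ppa_orderTop_mul, HahnSeries.orderTop_single one_ne_zero,
      HahnSeries.orderTop_single one_ne_zero, hμ0]
    calc ((c (ppaLoc n b) : WithTop ℤ) + (μ : WithTop ℤ))
        = ((c (ppaLoc n b) + μ : ℤ) : WithTop ℤ) := by norm_cast
      _ < ((c l + μ : ℤ) : WithTop ℤ) := by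
          exact_mod_cast add_lt_add_left (hc l hl) μ
      _ = (c l : WithTop ℤ) + (μ : WithTop ℤ) := by norm_cast
      _ ≤ (c l : WithTop ℤ) + (ppaZ η i y l).orderTop := add_le_add_right (hμall l) _
  cases b with
  | true =>
      have hZg : ppaZ η i (Matrix.mulVec
          ((cond true
            (Matrix.GeneralLinearGroup.map (HahnSeries.C : ℂ →+* LaurentSeries ℂ) (η i) * τ *
              (Matrix.GeneralLinearGroup.map (HahnSeries.C : ℂ →+* LaurentSeries ℂ) (η i))⁻¹)
            ((Matrix.GeneralLinearGroup.map (HahnSeries.C : ℂ →+* LaurentSeries ℂ) (η i) * τ *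
              (Matrix.GeneralLinearGroup.map (HahnSeries.C : ℂ →+* LaurentSeries ℂ) (η i))⁻¹)⁻¹) :
            GL (Fin (n + 1)) (LaurentSeries ℂ)) :
            Matrix (Fin (n + 1)) (Fin (n + 1)) (LaurentSeries ℂ)) y) =
          fun l => HahnSeries.single (k l) (1:ℂ) * ppaZ η i y l := by
        rw [cond_true, ppa_Z_mul]
        have hgrp : (Matrix.GeneralLinearGroup.map (HahnSeries.C : ℂ →+* LaurentSeries ℂ) (η i))⁻¹ *
            (Matrix.GeneralLinearGroup.map (HahnSeries.C : ℂ →+* LaurentSeries ℂ) (η i) * τ *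
              (Matrix.GeneralLinearGroup.map (HahnSeries.C : ℂ →+* LaurentSeries ℂ) (η i))⁻¹) =
            τ * (Matrix.GeneralLinearGroup.map (HahnSeries.C : ℂ →+* LaurentSeries ℂ) (η i))⁻¹ := by
          group
        rw [hgrp, Matrix.GeneralLinearGroup.coe_mul, ← Matrix.mulVec_mulVec, hτd]
        funext l
        rw [Matrix.mulVec_diagonal]
        rfl
      intro l hl
      rw [hZg]
      exact main k (fun l hl => h0 l (by simpa [ppaLoc] using hl)) l hl
  | false =>
      have hZg : ppaZ η i (Matrix.mulVec
          ((cond false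
            (Matrix.GeneralLinearGroup.map (HahnSeries.C : ℂ →+* LaurentSeries ℂ) (η i) * τ *
              (Matrix.GeneralLinearGroup.map (HahnSeries.C : ℂ →+* LaurentSeries ℂ) (η i))⁻¹)
            ((Matrix.GeneralLinearGroup.map (HahnSeries.C : ℂ →+* LaurentSeries ℂ) (η i) * τ *
              (Matrix.GeneralLinearGroup.map (HahnSeries.C : ℂ →+* LaurentSeries ℂ) (η i))⁻¹)⁻¹) :
            GL (Fin (n + 1)) (LaurentSeries ℂ)) :
            Matrix (Fin (n + 1)) (Fin (n + 1)) (LaurentSeries ℂ)) y) =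
          fun l => HahnSeries.single (-k l) (1:ℂ) * ppaZ η i y l := by
        rw [cond_false, ppa_Z_mul]
        have hgrp : (Matrix.GeneralLinearGroup.map (HahnSeries.C : ℂ →+* LaurentSeries ℂ) (η i))⁻¹ *
            (Matrix.GeneralLinearGroup.map (HahnSeries.C : ℂ →+* LaurentSeries ℂ) (η i) * τ *
              (Matrix.GeneralLinearGroup.map (HahnSeries.C : ℂ →+* LaurentSeries ℂ) (η i))⁻¹)⁻¹ =
            τ⁻¹ * (Matrix.GeneralLinearGroup.map (HahnSeries.C : ℂ →+* LaurentSeries ℂ) (η i))⁻¹ := by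
          group
        rw [hgrp, Matrix.GeneralLinearGroup.coe_mul, ← Matrix.mulVec_mulVec, hτinv]
        funext l
        rw [Matrix.mulVec_diagonal]
        rfl
      intro l hl
      rw [hZg]
      refine main (fun l => -k l) (fun l hl => ?_) l hl
      have : k l < k (Fin.last n) := hlast l (by simpa [ppaLoc] using hl)
      simp only [ppaLoc, if_neg Bool.false_ne_true]
      omega

private lemma ppa_seedZ {n r : ℕ} (η : Fin r → GL (Fin (n + 1)) ℂ)
    (x : Fin (n + 1) → ℂ) (i : Fin r) (l : Fin (n + 1)) :
    ppaZ η i (fun l' => (HahnSeries.C (x l') : LaurentSeries ℂ)) l =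
      HahnSeries.C (Matrix.mulVec ((η i)⁻¹ : Matrix (Fin (n+1)) (Fin (n+1)) ℂ) x l) := by
  unfold ppaZ
  rw [show ((Matrix.GeneralLinearGroup.map (HahnSeries.C : ℂ →+* LaurentSeries ℂ) (η i))⁻¹ :
      GL (Fin (n+1)) (LaurentSeries ℂ)) =
      Matrix.GeneralLinearGroup.map (HahnSeries.C : ℂ →+* LaurentSeries ℂ) ((η i)⁻¹) from
    (map_inv (Matrix.GeneralLinearGroup.map (HahnSeries.C : ℂ →+* LaurentSeries ℂ)) (η i)).symm]
  rw [ppa_coe_glmap, Matrix.GeneralLinearGroup.coe_inv]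
  exact (RingHom.map_mulVec (HahnSeries.C : ℂ →+* LaurentSeries ℂ)
    ((η i)⁻¹ : Matrix (Fin (n+1)) (Fin (n+1)) ℂ) x l).symm

private lemma ppa_seed_semi {n r : ℕ} (η : Fin r → GL (Fin (n + 1)) ℂ)
    (x : Fin (n + 1) → ℂ)
    (hx : ∀ (i : Fin r) (l : Fin (n + 1)),
      Matrix.mulVec ((η i)⁻¹ : Matrix (Fin (n+1)) (Fin (n+1)) ℂ) x l ≠ 0)
    (i : Fin r) (b : Bool) :
    ppaSEMI η i b (fun l => (HahnSeries.C (x l) : LaurentSeries ℂ)) := by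
  refine ⟨0, ?_, fun l => ?_⟩
  · rw [ppa_seedZ, ppa_orderTop_C _ (hx i _)]
    norm_cast
  · rw [ppa_seedZ, ppa_orderTop_C _ (hx i l)]
    norm_cast

private lemma ppa_not_dom {n r : ℕ} (hn : 1 ≤ n) (η : Fin r → GL (Fin (n + 1)) ℂ)
    (x : Fin (n + 1) → ℂ)
    (hx : ∀ (i : Fin r) (l : Fin (n + 1)),
      Matrix.mulVec ((η i)⁻¹ : Matrix (Fin (n+1)) (Fin (n+1)) ℂ) x l ≠ 0)
    (i : Fin r) (b : Bool) :
    ¬ ppaDOM η i b (fun l => (HahnSeries.C (x l) : LaurentSeries ℂ)) := by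
  intro hd
  obtain ⟨l1, hl1⟩ := ppa_ex_other hn b
  have h := hd l1 hl1
  rw [ppa_seedZ, ppa_seedZ, ppa_orderTop_C _ (hx i _), ppa_orderTop_C _ (hx i _)] at h
  exact lt_irrefl _ h

private lemma ppa_transfer {n r : ℕ} (hn : 1 ≤ n) (η : Fin r → GL (Fin (n + 1)) ℂ)
    (hinc : ∀ i j : Fin r, i ≠ j →
      ∀ v ∈ ({Matrix.mulVec (η i : Matrix (Fin (n+1)) (Fin (n+1)) ℂ)
                (Pi.single (0 : Fin (n+1)) (1 : ℂ)),
              Matrix.mulVec (η i : Matrix (Fin (n+1)) (Fin (n+1)) ℂ)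
                (Pi.single (Fin.last n) (1 : ℂ))} : Set (Fin (n+1) → ℂ)),
        (Matrix.mulVec ((η j)⁻¹ : Matrix (Fin (n+1)) (Fin (n+1)) ℂ) v) 0 ≠ 0 ∧
        (Matrix.mulVec ((η j)⁻¹ : Matrix (Fin (n+1)) (Fin (n+1)) ℂ) v) (Fin.last n) ≠ 0)
    (i j : Fin r) (hji : j ≠ i) (b' : Bool) (y : Fin (n + 1) → LaurentSeries ℂ)
    (hd : ppaDOM η j b' y) (b : Bool) : ppaSEMI η i b y := by
  classical
  obtain ⟨l1, hl1⟩ := ppa_ex_other hn b'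
  have hfin := ne_top_of_lt (hd l1 hl1)
  obtain ⟨μ, hμ⟩ := WithTop.ne_top_iff_exists.mp hfin
  set w := ppaZ η j y with hw
  set l0 := ppaLoc n b' with hl0def
  have hgl : Matrix.GeneralLinearGroup.map (HahnSeries.C : ℂ →+* LaurentSeries ℂ) ((η i)⁻¹ * η j) *
      (Matrix.GeneralLinearGroup.map (HahnSeries.C : ℂ →+* LaurentSeries ℂ) (η j))⁻¹ =
      (Matrix.GeneralLinearGroup.map (HahnSeries.C : ℂ →+* LaurentSeries ℂ) (η i))⁻¹ := by
    rw [_root_.map_mul, _root_.map_inv]; group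
  have hZ : ppaZ η i y = Matrix.mulVec
      ((((η i)⁻¹ * η j : GL (Fin (n+1)) ℂ) :
        Matrix (Fin (n+1)) (Fin (n+1)) ℂ).map (HahnSeries.C : ℂ →+* LaurentSeries ℂ)) w := by
    rw [hw]; unfold ppaZ
    rw [Matrix.mulVec_mulVec, ← ppa_coe_glmap ((η i)⁻¹ * η j),
      ← Matrix.GeneralLinearGroup.coe_mul, hgl]
  have hBne : ∀ bb : Bool,
      (((η i)⁻¹ * η j : GL (Fin (n+1)) ℂ) :
        Matrix (Fin (n+1)) (Fin (n+1)) ℂ) (ppaLoc n bb) l0 ≠ 0 := by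
    intro bb
    have hv : Matrix.mulVec (η j : Matrix (Fin (n+1)) (Fin (n+1)) ℂ) (Pi.single l0 (1:ℂ)) ∈
        ({Matrix.mulVec (η j : Matrix (Fin (n+1)) (Fin (n+1)) ℂ)
            (Pi.single (0 : Fin (n+1)) (1 : ℂ)),
          Matrix.mulVec (η j : Matrix (Fin (n+1)) (Fin (n+1)) ℂ)
            (Pi.single (Fin.last n) (1 : ℂ))} : Set (Fin (n+1) → ℂ)) := by
      cases b' with
      | true => left; rw [hl0def]; rfl
      | false => right; rw [hl0def]; rfl
    have h2 := hinc j i hji _ hv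
    have h3 : Matrix.mulVec ((η i)⁻¹ : Matrix (Fin (n+1)) (Fin (n+1)) ℂ)
        (Matrix.mulVec (η j : Matrix (Fin (n+1)) (Fin (n+1)) ℂ) (Pi.single l0 (1:ℂ))) =
        fun a => (((η i)⁻¹ * η j : GL (Fin (n+1)) ℂ) :
          Matrix (Fin (n+1)) (Fin (n+1)) ℂ) a l0 := by
      rw [Matrix.mulVec_mulVec, Matrix.mulVec_single]
      funext a
      simp [Matrix.GeneralLinearGroup.coe_mul, Matrix.GeneralLinearGroup.coe_inv]
    cases bb with
    | true =>
        have h4 := h2.1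
        rw [h3] at h4
        simpa [ppaLoc] using h4
    | false =>
        have h4 := h2.2
        rw [h3] at h4
        simpa [ppaLoc] using h4
  have hentry : ∀ l, ppaZ η i y l = ∑ l', HahnSeries.C
      ((((η i)⁻¹ * η j : GL (Fin (n+1)) ℂ) :
        Matrix (Fin (n+1)) (Fin (n+1)) ℂ) l l') * w l' := by
    intro l
    rw [hZ]
    simp [Matrix.mulVec, dotProduct, Matrix.map_apply]
  refine ⟨μ, ?_, fun l => ?_⟩
  · rw [hentry]
    refine ppa_orderTop_sum_eq Finset.univ _ μ l0 (Finset.mem_univ _) ?_ ?_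
    · rw [ppa_C_mul_eq _ _ (hBne b), ← hμ]
    · intro l' _ hl'
      refine lt_of_lt_of_le ?_ (ppa_C_mul_le _ _)
      rw [hμ]
      exact hd l' hl'
  · rw [hentry]
    refine ppa_le_orderTop_sum _ _ _ fun l' _ => ?_
    refine le_trans ?_ (ppa_C_mul_le _ _)
    by_cases h : l' = l0
    · rw [h, hμ]
    · rw [hμ]
      exact le_of_lt (hd l' h)

private lemma ppa_chain {α : Type*} (l : List (α × Bool))
    (hred : ∀ (L₂ L₃ : List (α × Bool)) (z : α) (b : Bool), l ≠ L₂ ++ (z, b) :: (z, !b) :: L₃) :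
    l.Chain' (fun p q => p.1 = q.1 → p.2 = q.2) := by
  induction l with
  | nil => simp [List.Chain']
  | cons a l ih =>
      cases l with
      | nil => simp [List.Chain']
      | cons a' l' =>
          simp only [List.Chain', List.isChain_cons_cons]
          constructor
          · intro h1
            by_contra h2
            obtain ⟨a1, a2⟩ := a; obtain ⟨b1, b2⟩ := a'
            simp only at h1 h2
            subst h1
            have hb2 : b2 = !a2 := by cases a2 <;> cases b2 <;> simp_all
            subst hb2
            exact hred [] l' a1 a2 rfl
          · refine ih fun L₂ L₃ z b h => ?_
            exact hred (a :: L₂) L₃ z b (by rw [List.cons_append, h])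

end PingPongAux

/-- Ping-pong proposition: for `τ = diag(t^{k₀},…,t^{kₙ})` over `L = ℂ((t))` with
`k₀ < k₁ ≤ … ≤ k_{n-1} < kₙ`, and `η₁,…,η_r ∈ GL_{n+1}(ℂ)` satisfying the
non-incidence condition, the elements `gᵢ = ηᵢ τ ηᵢ⁻¹` freely generate a free
subgroup of `GL_{n+1}(L)` of rank `r`. -/
theorem pingpong_free_generation (n r : ℕ) (hn : 1 ≤ n)
    (k : Fin (n + 1) → ℤ) (hmono : Monotone k)
    (h0 : ∀ i : Fin (n + 1), i ≠ 0 → k 0 < k i)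
    (hlast : ∀ i : Fin (n + 1), i ≠ Fin.last n → k i < k (Fin.last n))
    (η : Fin r → GL (Fin (n + 1)) ℂ)
    -- non-incidence: for `i ≠ j`, `ηᵢ(e₀), ηᵢ(eₙ)` lie outside
    -- `ker ηⱼ(e₀*) ∪ ker ηⱼ(eₙ*)`, where `ηⱼ(eₗ*) = eₗ* ∘ ηⱼ⁻¹`.
    (hinc : ∀ i j : Fin r, i ≠ j →
      ∀ v ∈ ({Matrix.mulVec (η i : Matrix (Fin (n+1)) (Fin (n+1)) ℂ)
                (Pi.single (0 : Fin (n+1)) (1 : ℂ)),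
              Matrix.mulVec (η i : Matrix (Fin (n+1)) (Fin (n+1)) ℂ)
                (Pi.single (Fin.last n) (1 : ℂ))} : Set (Fin (n+1) → ℂ)),
        (Matrix.mulVec ((η j)⁻¹ : Matrix (Fin (n+1)) (Fin (n+1)) ℂ) v) 0 ≠ 0 ∧
        (Matrix.mulVec ((η j)⁻¹ : Matrix (Fin (n+1)) (Fin (n+1)) ℂ) v) (Fin.last n) ≠ 0)
    (τ : GL (Fin (n + 1)) (LaurentSeries ℂ))
    (hτ : (τ : Matrix (Fin (n+1)) (Fin (n+1)) (LaurentSeries ℂ)) =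
      Matrix.diagonal (fun i =>
        (HahnSeries.single (1 : ℤ) (1 : ℂ) : LaurentSeries ℂ) ^ (k i))) :
    Function.Injective
      ((FreeGroup.lift (fun i : Fin r =>
          (Matrix.GeneralLinearGroup.map
            (HahnSeries.C : ℂ →+* LaurentSeries ℂ) (η i)) * τ *
          (Matrix.GeneralLinearGroup.map
            (HahnSeries.C : ℂ →+* LaurentSeries ℂ) (η i))⁻¹)) :
        FreeGroup (Fin r) →* GL (Fin (n + 1)) (LaurentSeries ℂ)) := by
  classical
  rw [injective_iff_map_eq_one]
  intro w hw
  by_contra hne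
  -- a generic seed vector over ℂ
  obtain ⟨x, hx⟩ : ∃ x : Fin (n + 1) → ℂ, ∀ (i : Fin r) (l : Fin (n + 1)),
      Matrix.mulVec ((η i)⁻¹ : Matrix (Fin (n+1)) (Fin (n+1)) ℂ) x l ≠ 0 := by
    by_contra hcon
    push_neg at hcon
    have hcov : ⋃ p : Fin r × Fin (n + 1),
        ((LinearMap.ker ((LinearMap.proj p.2).comp
          (Matrix.mulVecLin ((η p.1)⁻¹ : Matrix (Fin (n+1)) (Fin (n+1)) ℂ))) :
            Submodule ℂ (Fin (n+1) → ℂ)) : Set (Fin (n+1) → ℂ)) = Set.univ := by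
      ext z
      simp only [Set.mem_iUnion, Set.mem_univ, iff_true, SetLike.mem_coe, LinearMap.mem_ker,
        LinearMap.coe_comp, Function.comp_apply, Matrix.mulVecLin_apply, LinearMap.proj_apply]
      obtain ⟨i, l, hil⟩ := hcon z
      exact ⟨⟨i, l⟩, hil⟩
    obtain ⟨⟨i, l⟩, htop⟩ := Subspace.exists_eq_top_of_iUnion_eq_univ hcov
    rw [LinearMap.ker_eq_top] at htop
    have heval : Matrix.mulVec ((η i)⁻¹ : Matrix (Fin (n+1)) (Fin (n+1)) ℂ)
        (Matrix.mulVec (η i : Matrix (Fin (n+1)) (Fin (n+1)) ℂ) (Pi.single l (1:ℂ))) l = 0 := by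
      have h5 := LinearMap.congr_fun htop
        (Matrix.mulVec (η i : Matrix (Fin (n+1)) (Fin (n+1)) ℂ) (Pi.single l (1:ℂ)))
      simpa [Matrix.mulVecLin_apply] using h5
    rw [Matrix.mulVec_mulVec] at heval
    have hone : ((η i)⁻¹ : Matrix (Fin (n+1)) (Fin (n+1)) ℂ) *
        (η i : Matrix (Fin (n+1)) (Fin (n+1)) ℂ) = 1 := by
      rw [← Matrix.GeneralLinearGroup.coe_inv, ← Matrix.GeneralLinearGroup.coe_mul,
        inv_mul_cancel]
      exact Matrix.GeneralLinearGroup.coe_one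
    rw [hone, Matrix.one_mulVec, Pi.single_eq_same] at heval
    exact one_ne_zero heval
  set G : Fin r → GL (Fin (n + 1)) (LaurentSeries ℂ) := fun i =>
    Matrix.GeneralLinearGroup.map (HahnSeries.C : ℂ →+* LaurentSeries ℂ) (η i) * τ *
    (Matrix.GeneralLinearGroup.map (HahnSeries.C : ℂ →+* LaurentSeries ℂ) (η i))⁻¹ with hG
  -- the key ping-pong induction along a reduced word
  have key : ∀ (ℓ : List (Fin r × Bool)) (a : Fin r × Bool),
      (a :: ℓ).Chain' (fun p q => p.1 = q.1 → p.2 = q.2) →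
      ppaDOM η a.1 a.2 (Matrix.mulVec
        ((((a :: ℓ).map fun p => cond p.2 (G p.1) (G p.1)⁻¹).prod :
          GL (Fin (n + 1)) (LaurentSeries ℂ)) :
          Matrix (Fin (n + 1)) (Fin (n + 1)) (LaurentSeries ℂ))
        (fun l => (HahnSeries.C (x l) : LaurentSeries ℂ))) := by
    intro ℓ
    induction ℓ with
    | nil =>
        intro a _
        have hp := ppa_pump k h0 hlast τ hτ η a.1 a.2 _ (ppa_seed_semi η x hx a.1 a.2)
        simpa [hG, List.prod_cons] using hp
    | cons a' ℓ ih =>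
        intro a hch
        simp only [List.Chain', List.isChain_cons_cons] at hch
        have hd' := ih a' hch.2
        have hsemi : ppaSEMI η a.1 a.2 (Matrix.mulVec
            ((((a' :: ℓ).map fun p => cond p.2 (G p.1) (G p.1)⁻¹).prod :
              GL (Fin (n + 1)) (LaurentSeries ℂ)) :
              Matrix (Fin (n + 1)) (Fin (n + 1)) (LaurentSeries ℂ))
            (fun l => (HahnSeries.C (x l) : LaurentSeries ℂ))) := by
          by_cases hij : a.1 = a'.1
          · have hb := hch.1 hij
            rw [hij, hb]
            exact ppa_dom_semi hn η a'.1 a'.2 _ hd'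
          · exact ppa_transfer hn η hinc a.1 a'.1 (fun h => hij h.symm) a'.2 _ hd' a.2
        have hp := ppa_pump k h0 hlast τ hτ η a.1 a.2 _ hsemi
        have hconv : Matrix.mulVec
            ((((a :: a' :: ℓ).map fun p => cond p.2 (G p.1) (G p.1)⁻¹).prod :
              GL (Fin (n + 1)) (LaurentSeries ℂ)) :
              Matrix (Fin (n + 1)) (Fin (n + 1)) (LaurentSeries ℂ))
            (fun l => (HahnSeries.C (x l) : LaurentSeries ℂ)) =
            Matrix.mulVec ((cond a.2 (G a.1) (G a.1)⁻¹ :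
              GL (Fin (n + 1)) (LaurentSeries ℂ)) :
              Matrix (Fin (n + 1)) (Fin (n + 1)) (LaurentSeries ℂ))
            (Matrix.mulVec
              ((((a' :: ℓ).map fun p => cond p.2 (G p.1) (G p.1)⁻¹).prod :
                GL (Fin (n + 1)) (LaurentSeries ℂ)) :
                Matrix (Fin (n + 1)) (Fin (n + 1)) (LaurentSeries ℂ))
              (fun l => (HahnSeries.C (x l) : LaurentSeries ℂ))) := by
          rw [Matrix.mulVec_mulVec, ← Matrix.GeneralLinearGroup.coe_mul, List.map_cons,
            List.prod_cons]
        rw [hconv]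
        simpa [hG] using hp
  -- decompose the reduced word of `w`
  have hwl : w.toWord ≠ [] := fun h => hne (FreeGroup.toWord_eq_nil_iff.mp h)
  obtain ⟨a, ℓ, hwa⟩ : ∃ a ℓ, w.toWord = a :: ℓ := by
    cases h : w.toWord with
    | nil => exact absurd h hwl
    | cons a ℓ => exact ⟨a, ℓ, rfl⟩
  have hch : (a :: ℓ).Chain' (fun p q : Fin r × Bool => p.1 = q.1 → p.2 = q.2) := by
    rw [← hwa]
    refine ppa_chain _ fun L₂ L₃ z b hEq => ?_
    exact FreeGroup.reduce.not (x := z) (b := b)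
      (by rw [FreeGroup.reduce_toWord]; exact hEq)
  have hkey := key ℓ a hch
  have hlift : (((a :: ℓ).map fun p => cond p.2 (G p.1) (G p.1)⁻¹).prod :
      GL (Fin (n + 1)) (LaurentSeries ℂ)) = 1 := by
    rw [← hwa]
    have hlm : FreeGroup.lift G w =
        ((w.toWord.map fun p => cond p.2 (G p.1) (G p.1)⁻¹).prod :
          GL (Fin (n + 1)) (LaurentSeries ℂ)) := by
      conv_lhs => rw [← FreeGroup.mk_toWord (x := w)]
      exact FreeGroup.lift_mk
    rw [← hlm]
    exact hw
  rw [hlift] at hkey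
  have hone : Matrix.mulVec (((1 : GL (Fin (n + 1)) (LaurentSeries ℂ))) :
      Matrix (Fin (n + 1)) (Fin (n + 1)) (LaurentSeries ℂ))
      (fun l => (HahnSeries.C (x l) : LaurentSeries ℂ)) =
      fun l => (HahnSeries.C (x l) : LaurentSeries ℂ) := by
    rw [Matrix.GeneralLinearGroup.coe_one, Matrix.one_mulVec]
  rw [hone] at hkey
  exact ppa_not_dom hn η x hx a.1 a.2 hkey
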